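/- Let X be a real diagonal n×n matrix, let O_X := convexHull{g X gᵀ : g ∈ O(n)}, let Π_X := convexHull{σ·X : σ ∈ S_n}, and let P be the linear map on n×n real matrices that sets all off-diagonal entries to zero. Then for every face F of O_X (a convex extreme subset of O_X) there exists k ∈ O(n) such that P({k Y kᵀ : Y ∈ F}) is a face of Π_X. -/

import Mathlib

open Matrix

/-- The linear operation on `n × n` real matrices that sets all off-diagonal entries to zero
(orthogonal projection onto the subspace of diagonal matrices). -/
def diagPart {n : ℕ} (A : Matrix (Fin n) (Fin n) ℝ) : Matrix (Fin n) (Fin n) ℝ :=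
  Matrix.diagonal (fun i => A i i)

attribute [local instance] Matrix.normedAddCommGroup Matrix.normedSpace

section AbstractConvexity

variable {E : Type*} [AddCommGroup E] [Module ℝ E]

/-- Triangle lemma: if `x ∈ (a,b)` and `L ∈ (x,z)` then `L ∈ (a,w)` for some `w ∈ (b,z)`. -/
lemma openSegment_triangle {a b x z L : E} (h1 : x ∈ openSegment ℝ a b)
    (h2 : L ∈ openSegment ℝ x z) :
    ∃ w ∈ openSegment ℝ b z, L ∈ openSegment ℝ a w := by
  obtain ⟨p, q, hp, hq, hpq, hx⟩ := h1
  obtain ⟨r, s, hr, hs, hrs, hL⟩ := h2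
  have hden : 0 < r * q + s := by positivity
  refine ⟨(r * q / (r * q + s)) • b + (s / (r * q + s)) • z,
    ⟨r * q / (r * q + s), s / (r * q + s), by positivity, by positivity, by
      field_simp, rfl⟩, ⟨r * p, r * q + s, by positivity, hden, by nlinarith, ?_⟩⟩
  rw [smul_add, smul_smul, smul_smul]
  have h1 : (r * q + s) * (r * q / (r * q + s)) = r * q := by field_simp
  have h2 : (r * q + s) * (s / (r * q + s)) = s := by field_simp
  rw [h1, h2, ← hL, ← hx]
  module

/-- The face of a convex set generated by a point is an extreme set. -/
lemma isExtreme_faceGen {C : Set E} (hC : Convex ℝ C) {L : E} :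
    IsExtreme ℝ C {y ∈ C | y = L ∨ ∃ z ∈ C, L ∈ openSegment ℝ y z} := by
  constructor
  · exact fun y hy => hy.1
  · rintro x₁ hx₁ x₂ hx₂ x ⟨hxC, hx⟩ hseg
    have key : ∀ u v : E, u ∈ C → v ∈ C → x ∈ openSegment ℝ u v →
        u ∈ {y ∈ C | y = L ∨ ∃ z ∈ C, L ∈ openSegment ℝ y z} := by
      intro u v hu hv hx'
      rcases hx with rfl | ⟨z, hz, hLz⟩
      · exact ⟨hu, Or.inr ⟨v, hv, hx'⟩⟩
      · obtain ⟨w, hw, hLw⟩ := openSegment_triangle hx' hLz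
        exact ⟨hu, Or.inr ⟨w, (hC.openSegment_subset hv hz) hw, hLw⟩⟩
    exact key x₁ x₂ hx₁ hx₂ hseg

/-- Transport of extremeness along an injective linear map. -/
lemma IsExtreme.linear_image {φ : E → E} (hφ : IsLinearMap ℝ φ) (hinj : Function.Injective φ)
    {C F : Set E} (h : IsExtreme ℝ C F) : IsExtreme ℝ (φ '' C) (φ '' F) := by
  constructor
  · exact Set.image_mono h.1
  · rintro _ ⟨x₁, hx₁, rfl⟩ _ ⟨x₂, hx₂, rfl⟩ _ ⟨x, hx, rfl⟩ hseg
    have himg : φ x ∈ φ '' openSegment ℝ x₁ x₂ := by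
      have := image_openSegment _ (IsLinearMap.mk' φ hφ).toAffineMap x₁ x₂
      simp only [AffineMap.coe_mk, IsLinearMap.mk'_apply, LinearMap.coe_toAffineMap] at this
      rw [show φ '' openSegment ℝ x₁ x₂ = _ from this]
      exact hseg
    obtain ⟨y, hy, hyx⟩ := himg
    have h₁ := h.2 hx₁ hx₂ hx (hinj hyx ▸ hy)
    exact Set.mem_image_of_mem _ h₁

end AbstractConvexity

section RelintPoint

variable {E : Type*} [NormedAddCommGroup E] [NormedSpace ℝ E] [FiniteDimensional ℝ E]

/-- A nonempty convex set has a point that sees every other point from the inside. -/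
lemma exists_relint_point {s : Set E} (hconv : Convex ℝ s) (hne : s.Nonempty) :
    ∃ x ∈ s, ∀ y ∈ s, ∃ z ∈ s, x ∈ openSegment ℝ y z := by
  obtain ⟨x, hx⟩ := hne.intrinsicInterior hconv
  rw [mem_intrinsicInterior] at hx
  obtain ⟨y, hy, rfl⟩ := hx
  refine ⟨y, Set.mem_preimage.mp (interior_subset hy), fun p hp => ?_⟩
  haveI : Nonempty (affineSpan ℝ s) := ⟨⟨p, subset_affineSpan ℝ s hp⟩⟩
  set p' : affineSpan ℝ s := ⟨p, subset_affineSpan ℝ s hp⟩ with hp'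
  have hcont : Continuous (fun t : ℝ => AffineMap.lineMap p' y t) := by
    simp only [AffineMap.lineMap_apply]
    exact (continuous_id.smul (continuous_const (y := (y -ᵥ p' : (affineSpan ℝ s).direction)))).vadd (continuous_const (y := p'))
  have h1 : (fun t : ℝ => AffineMap.lineMap p' y t) 1
      ∈ interior ((↑) ⁻¹' s : Set (affineSpan ℝ s)) := by simpa using hy
  have hopen : IsOpen ((fun t : ℝ => AffineMap.lineMap p' y t) ⁻¹'
      interior ((↑) ⁻¹' s : Set (affineSpan ℝ s))) := isOpen_interior.preimage hcont
  obtain ⟨ε, hε, hball⟩ := Metric.isOpen_iff.1 hopen 1 h1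
  set δ := min ε 1 / 2 with hδ
  have hδ0 : 0 < δ := by positivity
  have hmem : (1 + δ) ∈ Metric.ball (1:ℝ) ε := by
    simp only [Metric.mem_ball, Real.dist_eq, add_sub_cancel_left, abs_of_pos hδ0]
    calc δ ≤ ε / 2 := by rw [hδ]; gcongr; exact min_le_left _ _
    _ < ε := by linarith
  have hz' : AffineMap.lineMap p' y (1 + δ) ∈ interior ((↑) ⁻¹' s : Set (affineSpan ℝ s)) :=
    hball hmem
  set z' : affineSpan ℝ s := AffineMap.lineMap p' y (1 + δ) with hz'def
  have hzs : (z' : E) ∈ s := Set.mem_preimage.mp (interior_subset hz')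
  refine ⟨z', hzs, ?_⟩
  have hcoe : (z' : E) = AffineMap.lineMap p (y : E) (1 + δ) := by
    rw [hz'def, AffineMap.lineMap_apply, AffineMap.lineMap_apply]
    rfl
  have h1δ : (0:ℝ) < 1 + δ := by linarith
  have hne' : (1 + δ) ≠ 0 := ne_of_gt h1δ
  refine ⟨δ / (1 + δ), 1 / (1 + δ), by positivity, by positivity, by field_simp; ring, ?_⟩
  rw [hcoe, AffineMap.lineMap_apply_module]
  match_scalars <;> field_simp <;> ring

end RelintPoint

section MatrixLemmas

variable {n : ℕ}

lemma diagPart_isLinear : IsLinearMap ℝ (diagPart (n := n)) := by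
  constructor
  · intro A B; unfold diagPart; ext i j; by_cases h : i = j <;> simp [Matrix.diagonal, h]
  · intro c A; unfold diagPart; ext i j; by_cases h : i = j <;> simp [Matrix.diagonal, h]

lemma diag_conj (d : Fin n → ℝ) (g : Matrix (Fin n) (Fin n) ℝ) (i : Fin n) :
    (g * Matrix.diagonal d * gᵀ) i i = ∑ j, (g i j)^2 * d j := by
  simp only [Matrix.mul_apply, Matrix.diagonal_apply, Matrix.transpose_apply,
    Finset.sum_mul]
  congr 1; ext j
  rw [Finset.sum_eq_single j]
  · simp; ring
  · intro x _ hx; simp [hx]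
  · simp

lemma sq_orth_ds {g : Matrix (Fin n) (Fin n) ℝ}
    (hg : g ∈ Matrix.orthogonalGroup (Fin n) ℝ) :
    Matrix.of (fun i j => (g i j)^2) ∈ doublyStochastic ℝ (Fin n) := by
  rw [mem_doublyStochastic_iff_sum]
  have h1 : g * star g = 1 := (Matrix.mem_orthogonalGroup_iff _ _).mp hg
  have h2 : star g * g = 1 := (Matrix.mem_orthogonalGroup_iff' _ _).mp hg
  refine ⟨fun i j => sq_nonneg _, fun i => ?_, fun j => ?_⟩
  · have := congrArg (fun M => M i i) h1
    simpa [Matrix.mul_apply, star, conjTranspose, pow_two] using this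
  · have := congrArg (fun M => M j j) h2
    simpa [Matrix.mul_apply, star, conjTranspose, pow_two] using this

lemma permMatrix_mem_orth (σ : Equiv.Perm (Fin n)) :
    σ.permMatrix ℝ ∈ Matrix.orthogonalGroup (Fin n) ℝ := by
  rw [Matrix.mem_orthogonalGroup_iff]
  have : star (σ.permMatrix ℝ) = (σ.permMatrix ℝ)ᵀ := rfl
  rw [Equiv.Perm.permMatrix, ← PEquiv.toMatrix_symm, ← PEquiv.toMatrix_trans,
    ← Equiv.toPEquiv_symm, ← Equiv.toPEquiv_trans]
  simp

lemma permMatrix_conj_diagonal (d : Fin n → ℝ) (σ : Equiv.Perm (Fin n)) :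
    σ.permMatrix ℝ * Matrix.diagonal d * (σ.permMatrix ℝ)ᵀ
      = Matrix.diagonal (fun i => d (σ i)) := by
  ext i j
  simp only [Matrix.mul_apply, Matrix.diagonal_apply, Matrix.transpose_apply,
    Equiv.Perm.permMatrix, PEquiv.toMatrix_apply, Equiv.toPEquiv_apply, Option.mem_def,
    Option.some.injEq]
  by_cases h : i = j
  · subst h
    simp [Finset.sum_ite_eq, Finset.sum_ite_eq', ite_and]
  · simp [h, Finset.sum_ite_eq, Finset.sum_ite_eq', ite_and,
      (Equiv.injective σ).ne_iff.mpr h]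

lemma permMatrix_mulVec (d : Fin n → ℝ) (σ : Equiv.Perm (Fin n)) :
    (σ.permMatrix ℝ) *ᵥ d = fun i => d (σ i) := by
  ext i
  simp [Matrix.mulVec, dotProduct, Equiv.Perm.permMatrix, PEquiv.toMatrix_apply,
    Equiv.toPEquiv_apply]

/-- generators of the orbitope -/
def SO (d : Fin n → ℝ) : Set (Matrix (Fin n) (Fin n) ℝ) :=
  {m | ∃ g ∈ Matrix.orthogonalGroup (Fin n) ℝ, m = g * Matrix.diagonal d * gᵀ}

/-- generators of the permutohedron -/
def SP (d : Fin n → ℝ) : Set (Matrix (Fin n) (Fin n) ℝ) :=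
  {m | ∃ σ : Equiv.Perm (Fin n), m = Matrix.diagonal (fun i => d (σ⁻¹ i))}

lemma mem_SP_iff {d : Fin n → ℝ} {m : Matrix (Fin n) (Fin n) ℝ} :
    m ∈ SP d ↔ ∃ σ : Equiv.Perm (Fin n), m = Matrix.diagonal (fun i => d (σ i)) := by
  constructor
  · rintro ⟨σ, rfl⟩; exact ⟨σ⁻¹, rfl⟩
  · rintro ⟨σ, rfl⟩; exact ⟨σ⁻¹, by simp⟩

lemma SP_subset_SO {d : Fin n → ℝ} : SP d ⊆ SO d := by
  rintro m ⟨σ, rfl⟩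
  exact ⟨(σ⁻¹).permMatrix ℝ, permMatrix_mem_orth _, (permMatrix_conj_diagonal d σ⁻¹).symm⟩

/-- Schur–Horn inclusion. -/
lemma schurHorn (d : Fin n → ℝ) {Y : Matrix (Fin n) (Fin n) ℝ}
    (hY : Y ∈ convexHull ℝ (SO d)) : diagPart Y ∈ convexHull ℝ (SP d) := by
  have hD := diagPart_isLinear (n := n)
  have himg : diagPart Y ∈ diagPart '' convexHull ℝ (SO d) := ⟨Y, hY, rfl⟩
  rw [hD.image_convexHull] at himg
  refine convexHull_min ?_ (convex_convexHull ℝ _) himg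
  rintro m ⟨m', ⟨g, hg, rfl⟩, rfl⟩
  set S := Matrix.of (fun i j => (g i j)^2) with hS
  have hdp : diagPart (g * Matrix.diagonal d * gᵀ) = Matrix.diagonal (S *ᵥ d) := by
    unfold diagPart
    have : (fun i => (g * Matrix.diagonal d * gᵀ) i i) = S *ᵥ d := by
      funext i
      rw [diag_conj]
      simp [Matrix.mulVec, dotProduct, hS]
    rw [this]
  rw [hdp]
  have hSds : S ∈ (doublyStochastic ℝ (Fin n) : Set _) := sq_orth_ds hg
  rw [doublyStochastic_eq_convexHull_permMatrix] at hSds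
  have hL : IsLinearMap ℝ (fun M : Matrix (Fin n) (Fin n) ℝ => Matrix.diagonal (M *ᵥ d)) := by
    constructor
    · intro A B; rw [Matrix.add_mulVec, Matrix.diagonal_add]; rfl
    · intro c A; rw [Matrix.smul_mulVec, Matrix.diagonal_smul]
  have : Matrix.diagonal (S *ᵥ d)
      ∈ (fun M : Matrix (Fin n) (Fin n) ℝ => Matrix.diagonal (M *ᵥ d)) ''
        convexHull ℝ {σ.permMatrix ℝ | σ : Equiv.Perm (Fin n)} := ⟨S, hSds, rfl⟩
  rw [hL.image_convexHull] at this
  refine convexHull_min ?_ (convex_convexHull ℝ _) this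
  rintro m ⟨m', ⟨σ, rfl⟩, rfl⟩
  refine subset_convexHull ℝ _ ?_
  rw [mem_SP_iff]
  refine ⟨σ, ?_⟩
  show Matrix.diagonal ((σ.permMatrix ℝ) *ᵥ d) = _
  rw [_root_.permMatrix_mulVec]

lemma transpose_eq_conjTranspose_real (A : Matrix (Fin n) (Fin n) ℝ) : Aᴴ = Aᵀ := by
  ext i j; simp [conjTranspose_apply]

/-- conjugation is linear -/
lemma conj_isLinear (k : Matrix (Fin n) (Fin n) ℝ) :
    IsLinearMap ℝ (fun Y : Matrix (Fin n) (Fin n) ℝ => k * Y * kᵀ) := by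
  constructor
  · intro A B; noncomm_ring
  · intro c A; simp [Matrix.mul_smul, Matrix.smul_mul]

lemma conjMap_injective {k : Matrix (Fin n) (Fin n) ℝ}
    (hk : k ∈ Matrix.orthogonalGroup (Fin n) ℝ) :
    Function.Injective (fun Y : Matrix (Fin n) (Fin n) ℝ => k * Y * kᵀ) := by
  have h1 : kᵀ * k = 1 := by
    simpa [Matrix.star_eq_conjTranspose, transpose_eq_conjTranspose_real] using
      (Matrix.mem_orthogonalGroup_iff' _ _).mp hk
  intro A B hAB
  simp only at hAB
  have : kᵀ * (k * A * kᵀ) * k = kᵀ * (k * B * kᵀ) * k := by rw [hAB]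
  calc A = (kᵀ * k) * A * (kᵀ * k) := by rw [h1]; simp
    _ = kᵀ * (k * A * kᵀ) * k := by noncomm_ring
    _ = kᵀ * (k * B * kᵀ) * k := this
    _ = (kᵀ * k) * B * (kᵀ * k) := by noncomm_ring
    _ = B := by rw [h1]; simp

lemma conj_image_SO {d : Fin n → ℝ} {k : Matrix (Fin n) (Fin n) ℝ}
    (hk : k ∈ Matrix.orthogonalGroup (Fin n) ℝ) :
    (fun Y : Matrix (Fin n) (Fin n) ℝ => k * Y * kᵀ) '' SO d = SO d := by
  have hkT : kᵀ ∈ Matrix.orthogonalGroup (Fin n) ℝ := by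
    have := Unitary.star_mem hk
    rwa [Matrix.star_eq_conjTranspose, transpose_eq_conjTranspose_real] at this
  have key : ∀ (g : Matrix (Fin n) (Fin n) ℝ), g ∈ Matrix.orthogonalGroup (Fin n) ℝ →
      k * (g * Matrix.diagonal d * gᵀ) * kᵀ = (k * g) * Matrix.diagonal d * (k * g)ᵀ := by
    intro g _; rw [Matrix.transpose_mul]; noncomm_ring
  apply Set.eq_of_subset_of_subset
  · rintro _ ⟨_, ⟨g, hg, rfl⟩, rfl⟩
    exact ⟨k * g, mul_mem hk hg, key g hg⟩
  · rintro m ⟨g, hg, rfl⟩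
    refine ⟨kᵀ * g * Matrix.diagonal d * (kᵀ * g)ᵀ, ⟨kᵀ * g, mul_mem hkT hg, rfl⟩, ?_⟩
    have h2 : k * kᵀ = 1 := by
      simpa [Matrix.star_eq_conjTranspose, transpose_eq_conjTranspose_real] using
        (Matrix.mem_orthogonalGroup_iff _ _).mp hk
    simp only [Matrix.transpose_mul, Matrix.transpose_transpose]
    calc k * (kᵀ * g * Matrix.diagonal d * (gᵀ * k)) * kᵀ
        = (k * kᵀ) * g * Matrix.diagonal d * gᵀ * (k * kᵀ) := by noncomm_ring
      _ = g * Matrix.diagonal d * gᵀ := by rw [h2]; simp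

/-- Diagonalization of a real symmetric matrix by an orthogonal conjugation. -/
lemma exists_orth_conj_diagonal {Y : Matrix (Fin n) (Fin n) ℝ} (hY : Y.IsHermitian) :
    ∃ k ∈ Matrix.orthogonalGroup (Fin n) ℝ, ∃ e : Fin n → ℝ,
      k * Y * kᵀ = Matrix.diagonal e := by
  set U : Matrix (Fin n) (Fin n) ℝ := (hY.eigenvectorUnitary : Matrix (Fin n) (Fin n) ℝ) with hU
  have hUmem : U ∈ Matrix.unitaryGroup (Fin n) ℝ := (hY.eigenvectorUnitary).prop
  have hspec : Y = U * Matrix.diagonal hY.eigenvalues * star U := by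
    have := hY.spectral_theorem
    simpa using this
  refine ⟨star U, Unitary.star_mem hUmem, hY.eigenvalues, ?_⟩
  have hsU : star U = Uᵀ := by
    rw [Matrix.star_eq_conjTranspose, transpose_eq_conjTranspose_real]
  have h1 : star U * U = 1 := (Matrix.mem_unitaryGroup_iff').mp hUmem
  calc star U * Y * (star U)ᵀ
      = star U * (U * Matrix.diagonal hY.eigenvalues * star U) * U := by
        have h2 : (star U)ᵀ = U := by rw [hsU, Matrix.transpose_transpose]
        rw [h2, ← hspec]
  _ = (star U * U) * Matrix.diagonal hY.eigenvalues * (star U * U) := by noncomm_ring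
  _ = Matrix.diagonal hY.eigenvalues := by rw [h1]; simp

lemma hull_SO_hermitian {d : Fin n → ℝ} :
    convexHull ℝ (SO d) ⊆ {A : Matrix (Fin n) (Fin n) ℝ | A.IsHermitian} := by
  refine convexHull_min ?_ ?_
  · rintro m ⟨g, hg, rfl⟩
    show Matrix.IsHermitian _
    unfold Matrix.IsHermitian
    rw [transpose_eq_conjTranspose_real]
    rw [Matrix.transpose_mul, Matrix.transpose_mul, Matrix.transpose_transpose,
      Matrix.diagonal_transpose, Matrix.mul_assoc]
  · intro A hA B hB a b _ _ _
    show Matrix.IsHermitian _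
    unfold Matrix.IsHermitian at *
    rw [Matrix.conjTranspose_add, Matrix.conjTranspose_smul, Matrix.conjTranspose_smul,
      star_trivial, star_trivial, hA, hB]

lemma diagPart_diagonal (v : Fin n → ℝ) : diagPart (Matrix.diagonal v) = Matrix.diagonal v := by
  unfold diagPart
  ext i j
  by_cases h : i = j <;> simp [h]

lemma hull_SP_diag {d : Fin n → ℝ} :
    convexHull ℝ (SP d) ⊆ {A : Matrix (Fin n) (Fin n) ℝ | diagPart A = A} := by
  refine convexHull_min ?_ ?_
  · rintro m ⟨σ, rfl⟩
    exact diagPart_diagonal _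
  · intro A hA B hB a b _ _ _
    show diagPart _ = _
    rw [diagPart_isLinear.map_add, diagPart_isLinear.map_smul, diagPart_isLinear.map_smul]
    rw [Set.mem_setOf_eq] at hA hB
    rw [hA, hB]

end MatrixLemmas

/-- for `X = diagonal d`, `O_X = convexHull {g X gᵀ : g ∈ O(n)}` and
`Π_X = convexHull {σ·X : σ ∈ S_n}`, every face `F` of `O_X` admits `k ∈ O(n)` such that
`P({k Y kᵀ : Y ∈ F})` is a face of `Π_X`, where `P` sets off-diagonal entries to zero. -/
theorem exists_conj_projection_face
    {n : ℕ} (d : Fin n → ℝ)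
    (F : Set (Matrix (Fin n) (Fin n) ℝ)) (hFconv : Convex ℝ F)
    (hF : IsExtreme ℝ (convexHull ℝ {m : Matrix (Fin n) (Fin n) ℝ |
        ∃ g ∈ Matrix.orthogonalGroup (Fin n) ℝ, m = g * Matrix.diagonal d * gᵀ}) F) :
    ∃ k ∈ Matrix.orthogonalGroup (Fin n) ℝ,
      Convex ℝ (diagPart '' ((fun Y => k * Y * kᵀ) '' F)) ∧
      IsExtreme ℝ (convexHull ℝ {m : Matrix (Fin n) (Fin n) ℝ |
          ∃ σ : Equiv.Perm (Fin n), m = Matrix.diagonal (fun i => d (σ⁻¹ i))})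
        (diagPart '' ((fun Y => k * Y * kᵀ) '' F)) := by
  have hF' : IsExtreme ℝ (convexHull ℝ (SO d)) F := hF
  rcases Set.eq_empty_or_nonempty F with rfl | hne
  · refine ⟨1, one_mem _, by simp [Set.image_empty]; exact convex_empty, ?_⟩
    constructor
    · simp
    · intro x₁ _ x₂ _ x hx
      simp at hx
  · -- pick a relative interior point of F
    obtain ⟨Y₀, hY₀F, hY₀max⟩ := exists_relint_point hFconv hne
    have hY₀C : Y₀ ∈ convexHull ℝ (SO d) := hF'.1 hY₀F
    have hY₀herm : Y₀.IsHermitian := hull_SO_hermitian hY₀C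
    obtain ⟨k, hk, e, hke⟩ := exists_orth_conj_diagonal hY₀herm
    set φ : Matrix (Fin n) (Fin n) ℝ → Matrix (Fin n) (Fin n) ℝ :=
      fun Y => k * Y * kᵀ with hφdef
    have hφ : IsLinearMap ℝ φ := conj_isLinear k
    have hinj : Function.Injective φ := conjMap_injective hk
    set Λ : Matrix (Fin n) (Fin n) ℝ := Matrix.diagonal e with hΛdef
    set F' : Set (Matrix (Fin n) (Fin n) ℝ) := φ '' F with hF'def
    have hC' : φ '' convexHull ℝ (SO d) = convexHull ℝ (SO d) := by
      rw [hφ.image_convexHull, conj_image_SO hk]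
    have hext : IsExtreme ℝ (convexHull ℝ (SO d)) F' := by
      have := hF'.linear_image hφ hinj
      rwa [hC'] at this
    have hΛF' : Λ ∈ F' := ⟨Y₀, hY₀F, hke⟩
    have hΛC : Λ ∈ convexHull ℝ (SO d) := hext.1 hΛF'
    have hdiagΛ : diagPart Λ = Λ := diagPart_diagonal e
    have hΛP : Λ ∈ convexHull ℝ (SP d) := by
      have := schurHorn d hΛC
      rwa [hdiagΛ] at this
    -- the relint property transported to F'
    have hmax' : ∀ Y ∈ F', ∃ Z ∈ F', Λ ∈ openSegment ℝ Y Z := by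
      rintro _ ⟨Y, hY, rfl⟩
      obtain ⟨Z, hZ, hseg⟩ := hY₀max Y hY
      refine ⟨φ Z, Set.mem_image_of_mem _ hZ, ?_⟩
      have himg := image_openSegment _ (IsLinearMap.mk' φ hφ).toAffineMap Y Z
      simp only [AffineMap.coe_mk, IsLinearMap.mk'_apply, LinearMap.coe_toAffineMap] at himg
      rw [← himg]
      exact ⟨Y₀, hseg, hke⟩
    -- the face of the permutohedron generated by Λ
    set G : Set (Matrix (Fin n) (Fin n) ℝ) :=
      {y ∈ convexHull ℝ (SP d) | y = Λ ∨ ∃ z ∈ convexHull ℝ (SP d), Λ ∈ openSegment ℝ y z}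
      with hGdef
    have hG : IsExtreme ℝ (convexHull ℝ (SP d)) G := isExtreme_faceGen (convex_convexHull ℝ _)
    have hPsubC : convexHull ℝ (SP d) ⊆ convexHull ℝ (SO d) := convexHull_mono SP_subset_SO
    have hDlin := diagPart_isLinear (n := n)
    -- the key identification
    have key : diagPart '' F' = G := by
      apply Set.eq_of_subset_of_subset
      · rintro _ ⟨Y, hY, rfl⟩
        have hYC : Y ∈ convexHull ℝ (SO d) := hext.1 hY
        refine ⟨schurHorn d hYC, ?_⟩
        obtain ⟨Z, hZ, hseg⟩ := hmax' Y hY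
        have hZC : Z ∈ convexHull ℝ (SO d) := hext.1 hZ
        refine Or.inr ⟨diagPart Z, schurHorn d hZC, ?_⟩
        have himg := image_openSegment _ (IsLinearMap.mk' _ hDlin).toAffineMap Y Z
        simp only [AffineMap.coe_mk, IsLinearMap.mk'_apply, LinearMap.coe_toAffineMap] at himg
        rw [← himg]
        exact ⟨Λ, hseg, hdiagΛ⟩
      · rintro y ⟨hyP, hy⟩
        rcases hy with rfl | ⟨z, hzP, hseg⟩
        · exact ⟨Λ, hΛF', hdiagΛ⟩
        · have hyF' : y ∈ F' := (hext.2 (hPsubC hyP) (hPsubC hzP) hΛF' hseg)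
          have : diagPart y = y := hull_SP_diag hyP
          exact ⟨y, hyF', this⟩
    refine ⟨k, hk, ?_, ?_⟩
    · exact (hFconv.is_linear_image hφ).is_linear_image hDlin
    · show IsExtreme ℝ (convexHull ℝ (SP d)) (diagPart '' F')
      rw [key]
      exact hG
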